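/- Let u : ℝ → ℝ be bounded and continuous, and let a < b be real numbers such that u(x) = −1 for every x ∈ [a,b]. Suppose that ∫_ℝ K(b−y)·(u(y) + u(y)²/2) dy ≤ ∫_ℝ K(a−y)·(u(y) + u(y)²/2) dy. Then u(x) = −1 for every x ∈ ℝ. -/

import Mathlib

open MeasureTheory Real Set

/-- The kernel `K(x) = -sgn(x) e^{-|x|}/2`, the derivative of the Green's function
`G₂(x) = e^{-|x|}/2` of `1 - d²/dx²` on `ℝ`. -/
noncomputable def bbmK (x : ℝ) : ℝ := -Real.sign x * Real.exp (-|x|) / 2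

lemma bbm_measurable_sign : Measurable Real.sign := by
  have h : Real.sign = fun r : ℝ => if r < 0 then (-1 : ℝ) else if 0 < r then 1 else 0 := by
    funext r; rw [Real.sign]
  rw [h]
  exact Measurable.ite (measurableSet_lt measurable_id measurable_const) measurable_const
    (Measurable.ite (measurableSet_lt measurable_const measurable_id) measurable_const
      measurable_const)

lemma bbmK_measurable : Measurable bbmK := by
  unfold bbmK
  exact ((bbm_measurable_sign.neg).mul
    ((Real.continuous_exp.comp (continuous_abs.neg)).measurable)).div_const 2

lemma bbmK_abs_le (x : ℝ) : |bbmK x| ≤ Real.exp (-|x|) := by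
  unfold bbmK
  rw [abs_div, abs_mul, abs_neg, abs_of_pos (Real.exp_pos _),
    abs_of_pos (by norm_num : (0:ℝ) < 2)]
  have h1 : |Real.sign x| ≤ 1 := by
    rcases lt_trichotomy x 0 with h | h | h
    · rw [Real.sign_of_neg h]; norm_num
    · rw [h, Real.sign_zero]; norm_num
    · rw [Real.sign_of_pos h]; norm_num
  nlinarith [Real.exp_pos (-|x|), abs_nonneg (Real.sign x)]

lemma bbm_int_exp : Integrable (fun y : ℝ => Real.exp (-|y|)) := by
  have hIoi : IntegrableOn (fun y : ℝ => Real.exp (-|y|)) (Ioi (0:ℝ)) := by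
    refine (exp_neg_integrableOn_Ioi 0 one_pos).congr_fun (fun y hy => ?_) measurableSet_Ioi
    rw [abs_of_pos (mem_Ioi.mp hy)]; ring_nf
  have hIci : IntegrableOn (fun y : ℝ => Real.exp (-|y|)) (Ici (0:ℝ)) :=
    Iff.mpr integrableOn_Ici_iff_integrableOn_Ioi hIoi
  have hIic : IntegrableOn (fun y : ℝ => Real.exp (-|y|)) (Iic (0:ℝ)) := by
    have h := ((Measure.measurePreserving_neg (volume : Measure ℝ)).integrableOn_comp_preimage
      measurableEmbedding_neg).mpr hIci
    have hs : (Neg.neg : ℝ → ℝ) ⁻¹' (Ici (0:ℝ)) = Iic 0 := by ext y; simp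
    have hf : ((fun y : ℝ => Real.exp (-|y|)) ∘ (Neg.neg : ℝ → ℝ))
        = fun y : ℝ => Real.exp (-|y|) := by
      funext y; simp [Function.comp]
    rwa [hs, hf] at h
  rw [← integrableOn_univ, ← Set.Iic_union_Ioi (a := (0:ℝ))]
  exact hIic.union hIoi

lemma bbm_integrable (x : ℝ) {f : ℝ → ℝ} (hf : Continuous f) {M : ℝ} (hM : ∀ y, |f y| ≤ M) :
    Integrable (fun y : ℝ => bbmK (x - y) * f y) := by
  have hdom : Integrable (fun y : ℝ => M * Real.exp (-|x - y|)) :=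
    (bbm_int_exp.comp_sub_left x).const_mul M
  refine hdom.mono
    (((bbmK_measurable.comp (measurable_const.sub measurable_id)).mul
      hf.measurable).aestronglyMeasurable) (Filter.Eventually.of_forall fun y => ?_)
  have h0 : (0:ℝ) ≤ M := le_trans (abs_nonneg _) (hM 0)
  rw [Real.norm_eq_abs, Real.norm_eq_abs, abs_mul,
    abs_of_nonneg (mul_nonneg h0 (Real.exp_pos _).le)]
  have h1 := bbmK_abs_le (x - y)
  have h2 := hM y
  nlinarith [abs_nonneg (f y), abs_nonneg (bbmK (x - y)), Real.exp_pos (-|x - y|)]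

lemma bbm_rep (x : ℝ) {f : ℝ → ℝ} (hf : Continuous f) {M : ℝ} (hM : ∀ y, |f y| ≤ M) :
    (∫ y : ℝ, bbmK (x - y) * f y) =
      -(Real.exp (-x) / 2) * (∫ y in Iic x, Real.exp y * f y) +
        (Real.exp x / 2) * (∫ y in Ioi x, Real.exp (-y) * f y) := by
  have hint := bbm_integrable x hf hM
  rw [← intervalIntegral.integral_Iic_add_Ioi (hint.integrableOn) (hint.integrableOn)]
  congr 1
  · rw [← integral_const_mul]
    refine setIntegral_congr_ae measurableSet_Iic ?_
    have hne : ∀ᵐ y : ℝ, y ∉ ({x} : Set ℝ) := (Set.countable_singleton x).ae_notMem volume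
    filter_upwards [hne] with y hy hyx
    have hlt : y < x := lt_of_le_of_ne hyx (by simpa using hy)
    have hpos : 0 < x - y := by linarith
    simp only [bbmK]
    rw [Real.sign_of_pos hpos, abs_of_pos hpos]
    have hexp : Real.exp (-(x - y)) = Real.exp (-x) * Real.exp y := by
      rw [← Real.exp_add]; congr 1; ring
    rw [hexp]; ring
  · rw [← integral_const_mul]
    refine setIntegral_congr_ae measurableSet_Ioi (Filter.Eventually.of_forall fun y hy => ?_)
    have hlt : x < y := mem_Ioi.mp hy
    have hneg : x - y < 0 := by linarith
    simp only [bbmK]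
    rw [Real.sign_of_neg hneg, abs_of_neg hneg]
    have hexp : Real.exp (-(-(x - y))) = Real.exp x * Real.exp (-y) := by
      rw [← Real.exp_add]; congr 1; ring
    rw [hexp]; ring

/-- Time-slice unique continuation for BBM: if a bounded continuous `u` equals `-1` on `[a,b]`
and `∫ K(b-y)(u+u²/2) dy ≤ ∫ K(a-y)(u+u²/2) dy` (i.e. `∂ₜu(b,t₀) ≥ ∂ₜu(a,t₀)`), then
`u ≡ -1`. -/
theorem bbm_unique_continuation (u : ℝ → ℝ)
    (hbdd : ∃ C : ℝ, ∀ x, |u x| ≤ C) (hcont : Continuous u)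
    (a b : ℝ) (hab : a < b)
    (hm1 : ∀ x ∈ Set.Icc a b, u x = -1)
    (hineq : (∫ y : ℝ, bbmK (b - y) * (u y + u y ^ 2 / 2)) ≤
      ∫ y : ℝ, bbmK (a - y) * (u y + u y ^ 2 / 2)) :
    ∀ x : ℝ, u x = -1 := by
  obtain ⟨C, hC⟩ := hbdd
  set g : ℝ → ℝ := fun y => (u y + 1) ^ 2 / 2 with hg_def
  have hg_cont : Continuous g := ((hcont.add continuous_const).pow 2).div_const 2
  have hg_nonneg : ∀ y, 0 ≤ g y := fun y => by
    simp only [hg_def]; positivity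
  have hMg : ∀ y, |g y| ≤ (C + 1) ^ 2 / 2 := by
    intro y
    rw [abs_of_nonneg (hg_nonneg y)]
    have h1 : |u y + 1| ≤ C + 1 := (abs_add_le (u y) 1).trans (by rw [abs_one]; linarith [hC y])
    have h2 := abs_le.mp h1
    simp only [hg_def]
    nlinarith [h2.1, h2.2]
  -- convert the integrals from `u + u²/2` to `g`
  have hconv : ∀ x : ℝ, (∫ y : ℝ, bbmK (x - y) * (u y + u y ^ 2 / 2))
      = ∫ y : ℝ, bbmK (x - y) * g y := by
    intro x
    have h1 : Integrable (fun y : ℝ => bbmK (x - y) * g y) := bbm_integrable x hg_cont hMg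
    have h2 : Integrable (fun y : ℝ => bbmK (x - y) * (1 / 2 : ℝ)) :=
      bbm_integrable x continuous_const (M := 1 / 2) (fun y => le_of_eq (abs_of_nonneg (by norm_num)))
    have h3 : (fun y : ℝ => bbmK (x - y) * (u y + u y ^ 2 / 2))
        = fun y : ℝ => bbmK (x - y) * g y - bbmK (x - y) * (1 / 2 : ℝ) := by
      funext y; simp only [hg_def]; ring
    rw [h3, integral_sub h1 h2]
    have h4 : (∫ y : ℝ, bbmK (x - y) * (1 / 2 : ℝ)) = 0 := by
      rw [integral_mul_const]
      have h5 : (∫ y : ℝ, bbmK (x - y)) = ∫ y : ℝ, bbmK y :=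
        integral_sub_left_eq_self bbmK volume x
      have hodd : ∀ z : ℝ, bbmK (-z) = -bbmK z := fun z => by
        simp only [bbmK]; rw [Real.sign_neg, abs_neg]; ring
      have h6 : (∫ y : ℝ, bbmK y) = 0 := by
        have h7 := integral_neg_eq_self bbmK (volume : Measure ℝ)
        simp_rw [hodd] at h7
        rw [integral_neg] at h7
        linarith
      rw [h5, h6, zero_mul]
    rw [h4, sub_zero]
  -- integrability of the weighted pieces
  have hA_int : ∀ c : ℝ, IntegrableOn (fun y : ℝ => Real.exp y * g y) (Iic c) := by
    intro c
    have hdom : Integrable (fun y : ℝ => ((C + 1) ^ 2 / 2 * Real.exp c) * Real.exp (-|c - y|)) :=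
      (bbm_int_exp.comp_sub_left c).const_mul _
    refine Integrable.mono (hdom.restrict (s := Iic c))
      ((Real.continuous_exp.mul hg_cont).aestronglyMeasurable.restrict) ?_
    filter_upwards [ae_restrict_mem measurableSet_Iic] with y hy
    have hya : y ≤ c := hy
    have h2 : Real.exp c * Real.exp (-(c - y)) = Real.exp y := by
      rw [← Real.exp_add]; congr 1; ring
    have hgy_le : g y ≤ (C + 1) ^ 2 / 2 := (le_abs_self _).trans (hMg y)
    rw [abs_of_nonneg (by linarith : (0:ℝ) ≤ c - y), Real.norm_eq_abs, Real.norm_eq_abs,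
      abs_of_nonneg (mul_nonneg (Real.exp_pos y).le (hg_nonneg y)),
      abs_of_nonneg (mul_nonneg
        (by positivity : (0:ℝ) ≤ (C + 1) ^ 2 / 2 * Real.exp c) (Real.exp_pos (-(c - y))).le),
      mul_assoc, h2]
    nlinarith [mul_nonneg (sub_nonneg.mpr hgy_le) (Real.exp_pos y).le]
  have hB_int : ∀ c : ℝ, IntegrableOn (fun y : ℝ => Real.exp (-y) * g y) (Ioi c) := by
    intro c
    have hdom : Integrable
        (fun y : ℝ => ((C + 1) ^ 2 / 2 * Real.exp (-c)) * Real.exp (-|c - y|)) :=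
      (bbm_int_exp.comp_sub_left c).const_mul _
    refine Integrable.mono (hdom.restrict (s := Ioi c))
      (((Real.continuous_exp.comp continuous_neg).mul hg_cont).aestronglyMeasurable.restrict) ?_
    filter_upwards [ae_restrict_mem measurableSet_Ioi] with y hy
    have hya : c < y := hy
    have h2 : Real.exp (-c) * Real.exp (-(-(c - y))) = Real.exp (-y) := by
      rw [← Real.exp_add]; congr 1; ring
    have hgy_le : g y ≤ (C + 1) ^ 2 / 2 := (le_abs_self _).trans (hMg y)
    rw [abs_of_neg (by linarith : c - y < 0), Real.norm_eq_abs, Real.norm_eq_abs,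
      abs_of_nonneg (mul_nonneg (Real.exp_pos (-y)).le (hg_nonneg y)),
      abs_of_nonneg (mul_nonneg
        (by positivity : (0:ℝ) ≤ (C + 1) ^ 2 / 2 * Real.exp (-c)) (Real.exp_pos (-(-(c - y)))).le),
      mul_assoc, h2]
    nlinarith [mul_nonneg (sub_nonneg.mpr hgy_le) (Real.exp_pos (-y)).le]
  -- the shifts across [a,b] where g vanishes
  have hgab : ∀ y ∈ Set.Icc a b, g y = 0 := by
    intro y hy
    simp only [hg_def]
    rw [hm1 y hy]; norm_num
  have hA_shift : (∫ y in Iic b, Real.exp y * g y) = ∫ y in Iic a, Real.exp y * g y := by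
    have hdisj : Disjoint (Iic a) (Ioc a b) := by
      rw [Set.disjoint_left]; rintro y hy1 ⟨hy2, -⟩; exact absurd hy1 (not_le.mpr hy2)
    have h0 : (∫ y in Ioc a b, Real.exp y * g y) = 0 :=
      setIntegral_eq_zero_of_forall_eq_zero fun y hy => by
        rw [hgab y ⟨hy.1.le, hy.2⟩, mul_zero]
    calc (∫ y in Iic b, Real.exp y * g y)
        = ∫ y in Iic a ∪ Ioc a b, Real.exp y * g y := by
          rw [Set.Iic_union_Ioc_eq_Iic hab.le]
      _ = (∫ y in Iic a, Real.exp y * g y) + ∫ y in Ioc a b, Real.exp y * g y :=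
          setIntegral_union hdisj measurableSet_Ioc (hA_int a)
            ((hA_int b).mono_set Set.Ioc_subset_Iic_self)
      _ = ∫ y in Iic a, Real.exp y * g y := by rw [h0, add_zero]
  have hB_shift : (∫ y in Ioi a, Real.exp (-y) * g y) = ∫ y in Ioi b, Real.exp (-y) * g y := by
    have hdisj : Disjoint (Ioc a b) (Ioi b) := by
      rw [Set.disjoint_left]; rintro y ⟨-, hy2⟩ hy3; exact absurd hy3 (not_lt.mpr hy2)
    have h0 : (∫ y in Ioc a b, Real.exp (-y) * g y) = 0 :=
      setIntegral_eq_zero_of_forall_eq_zero fun y hy => by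
        rw [hgab y ⟨hy.1.le, hy.2⟩, mul_zero]
    calc (∫ y in Ioi a, Real.exp (-y) * g y)
        = ∫ y in Ioc a b ∪ Ioi b, Real.exp (-y) * g y := by
          rw [Set.Ioc_union_Ioi_eq_Ioi hab.le]
      _ = (∫ y in Ioc a b, Real.exp (-y) * g y) + ∫ y in Ioi b, Real.exp (-y) * g y :=
          setIntegral_union hdisj measurableSet_Ioi
            ((hB_int a).mono_set Set.Ioc_subset_Ioi_self) (hB_int b)
      _ = ∫ y in Ioi b, Real.exp (-y) * g y := by rw [h0, zero_add]
  -- rewrite the hypothesis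
  rw [hconv a, hconv b, bbm_rep a hg_cont hMg, bbm_rep b hg_cont hMg,
    hA_shift, hB_shift] at hineq
  set A := ∫ y in Iic a, Real.exp y * g y with hA_def
  set B := ∫ y in Ioi b, Real.exp (-y) * g y with hB_def
  have hA_nonneg : 0 ≤ A :=
    setIntegral_nonneg measurableSet_Iic fun y _ => mul_nonneg (Real.exp_pos y).le (hg_nonneg y)
  have hB_nonneg : 0 ≤ B :=
    setIntegral_nonneg measurableSet_Ioi fun y _ => mul_nonneg (Real.exp_pos (-y)).le (hg_nonneg y)
  have hea : Real.exp a < Real.exp b := Real.exp_lt_exp.mpr hab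
  have heb : Real.exp (-b) < Real.exp (-a) := Real.exp_lt_exp.mpr (by linarith)
  have hA0 : A = 0 := by
    have hA_le : A ≤ 0 := by
      nlinarith [mul_nonneg (sub_nonneg.mpr hea.le) hB_nonneg, mul_nonneg (sub_nonneg.mpr heb.le) hA_nonneg]
    exact le_antisymm hA_le hA_nonneg
  have hB0 : B = 0 := by
    have hB_le : B ≤ 0 := by
      nlinarith [mul_nonneg (sub_nonneg.mpr hea.le) hB_nonneg, mul_nonneg (sub_nonneg.mpr heb.le) hA_nonneg]
    exact le_antisymm hB_le hB_nonneg
  -- from the vanishing integrals, g vanishes outside [a,b]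
  have hg_left : ∀ x, x < a → g x = 0 := by
    intro x hx
    have hA' := (setIntegral_eq_zero_iff_of_nonneg_ae
      (Filter.Eventually.of_forall fun y => mul_nonneg (Real.exp_pos y).le (hg_nonneg y))
      (hA_int a)).mp hA0
    have hA'' : ∀ᵐ y : ℝ, y ∈ Iic a → Real.exp y * g y = 0 := by
      rw [← ae_restrict_iff' measurableSet_Iic]
      filter_upwards [hA'] with y hy using hy
    set U := Iio a ∩ {y | g y ≠ 0} with hU_def
    have hU_open : IsOpen U :=
      isOpen_Iio.inter (isOpen_compl_singleton.preimage hg_cont)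
    have hU_null : volume U = 0 := by
      rw [ae_iff] at hA''
      refine measure_mono_null ?_ hA''
      rintro y ⟨hy1, hy2⟩
      simp only [mem_setOf_eq, Classical.not_imp]
      exact ⟨Set.mem_Iic.mpr hy1.le, mul_ne_zero (Real.exp_ne_zero y) hy2⟩
    have hU_empty : U = ∅ := hU_open.eq_empty_of_measure_zero hU_null
    by_contra hgx
    have : x ∈ U := ⟨hx, hgx⟩
    rw [hU_empty] at this
    exact this
  have hg_right : ∀ x, b < x → g x = 0 := by
    intro x hx
    have hB' := (setIntegral_eq_zero_iff_of_nonneg_ae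
      (Filter.Eventually.of_forall fun y => mul_nonneg (Real.exp_pos (-y)).le (hg_nonneg y))
      (hB_int b)).mp hB0
    have hB'' : ∀ᵐ y : ℝ, y ∈ Ioi b → Real.exp (-y) * g y = 0 := by
      rw [← ae_restrict_iff' measurableSet_Ioi]
      filter_upwards [hB'] with y hy using hy
    set U := Ioi b ∩ {y | g y ≠ 0} with hU_def
    have hU_open : IsOpen U :=
      isOpen_Ioi.inter (isOpen_compl_singleton.preimage hg_cont)
    have hU_null : volume U = 0 := by
      rw [ae_iff] at hB''
      refine measure_mono_null ?_ hB''
      rintro y ⟨hy1, hy2⟩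
      simp only [mem_setOf_eq, Classical.not_imp]
      exact ⟨hy1, mul_ne_zero (Real.exp_ne_zero (-y)) hy2⟩
    have hU_empty : U = ∅ := hU_open.eq_empty_of_measure_zero hU_null
    by_contra hgx
    have : x ∈ U := ⟨hx, hgx⟩
    rw [hU_empty] at this
    exact this
  -- conclude
  intro x
  have hgz : g x = 0 := by
    rcases lt_or_ge x a with h | h
    · exact hg_left x h
    · rcases le_or_gt x b with h2 | h2
      · exact hgab x ⟨h, h2⟩
      · exact hg_right x h2
  have hsq : (u x + 1) ^ 2 = 0 := by
    have := hgz
    simp only [hg_def] at this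
    linarith
  have := (pow_eq_zero_iff (two_ne_zero)).mp hsq
  linarith
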